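/- Let (ℒ, ℒ̄) be a Toda Lax pair in the standard gauge and φ : ℤ → ℂ such that the constraint of type B, (T − T†)ℒ̄ = ℒ†(T − T†), holds. Then for every integer k ≥ 1 the following matrix identity holds: (T − T†)B̄_k − B_k†(T − T†) = −((ℒ†)^k)_{−1} T + T (ℒ̄^k)_{−1} − Φ_k T† + T† Φ̄_k. -/
import Mathlib


/-- Pseudo-difference operators modeled as ℤ×ℤ matrices over ℂ. -/
abbrev PDO := ℤ → ℤ → ℂ

/-- Entrywise matrix product `(MN)(n,m) = Σ_k M(n,k) N(k,m)` (a `tsum`;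
it reduces to a finite sum whenever the supports make it finitely supported). -/
noncomputable def pmul (M N : PDO) : PDO := fun n m => ∑' k : ℤ, M n k * N k m

/-- The adjoint: `(M†)(n,m) = M(m,n)`. -/
def padj (M : PDO) : PDO := fun n m => M m n

/-- Matrix powers, with `ppow M 0` the identity matrix. -/
noncomputable def ppow (M : PDO) : ℕ → PDO
  | 0 => fun n m => if n = m then 1 else 0
  | k + 1 => pmul (ppow M k) M

/-- `(M)_{>0}`: the strictly upper-triangular (positive-diagonal) part. -/
def pplus (M : PDO) : PDO := fun n m => if n < m then M n m else 0

/-- `(M)_{<0}`: the strictly lower-triangular (negative-diagonal) part. -/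
def pminus (M : PDO) : PDO := fun n m => if m < n then M n m else 0

/-- `(M)_0`: the diagonal part. -/
def pzero (M : PDO) : PDO := fun n m => if n = m then M n m else 0

/-- `(M)_j`: the j-th diagonal part, with `(n, n+j)` entry `M(n, n+j)`. -/
def pdiag (j : ℤ) (M : PDO) : PDO := fun n m => if m = n + j then M n m else 0

/-- The shift matrix Λ: entries 1 iff `m = n+1`. -/
def shiftΛ : PDO := fun n m => if m = n + 1 then 1 else 0

/-- The inverse shift matrix Λ⁻¹ (transpose of Λ): entries 1 iff `m = n-1`. -/
def shiftΛinv : PDO := fun n m => if m = n - 1 then 1 else 0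

/-- Matrix `T` with entries `T(n,m) = e^{-φ(n)}` if `m = n+1`, else 0. -/
noncomputable def Tmat (φ : ℤ → ℂ) : PDO :=
  fun n m => if m = n + 1 then Complex.exp (-(φ n)) else 0

/-- A Toda Lax pair in the standard gauge: `L` is of lower type with
`L(n,m) = 0` for `m > n+1` and `L(n,n+1) = 1`; `L̄` is of upper type with
`L̄(n,m) = 0` for `m < n-1`. -/
def IsStandardPair (L Lb : PDO) : Prop :=
  (∀ n m : ℤ, n + 1 < m → L n m = 0) ∧ (∀ n : ℤ, L n (n + 1) = 1) ∧
  (∀ n m : ℤ, m < n - 1 → Lb n m = 0)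

/-- `B_k = (L^k)_{>0}`. -/
noncomputable def Bop (L : PDO) (k : ℕ) : PDO := pplus (ppow L k)

/-- `Φ_k = (L^k)_0`. -/
noncomputable def Phiop (L : PDO) (k : ℕ) : PDO := pzero (ppow L k)

/-- `B̄_k = (L̄^k)_{<0}`. -/
noncomputable def Bbarop (Lb : PDO) (k : ℕ) : PDO := pminus (ppow Lb k)

/-- `Φ̄_k = (L̄^k)_0`. -/
noncomputable def Phibarop (Lb : PDO) (k : ℕ) : PDO := pzero (ppow Lb k)

namespace TodaAux

/-- shorthand -/
noncomputable def c (φ : ℤ → ℂ) (j : ℤ) : ℂ := Complex.exp (-(φ j))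

lemma summable_of_band {f : ℤ → ℂ} (a b : ℤ) (h : ∀ j, j < a ∨ b < j → f j = 0) :
    Summable f := by
  refine summable_of_ne_finset_zero (s := Finset.Icc a b) (fun j hj => h j ?_)
  simp only [Finset.mem_Icc] at hj; omega

lemma pmul_A_left (φ : ℤ → ℂ) (M : PDO) (n m : ℤ) :
    pmul (Tmat φ - padj (Tmat φ)) M n m
      = c φ n * M (n+1) m - c φ (n-1) * M (n-1) m := by
  unfold pmul
  rw [tsum_eq_sum (s := {n-1, n+1}) ?_]
  · rw [Finset.sum_pair (by omega)]
    have h1 : (Tmat φ - padj (Tmat φ)) n (n-1) = -(c φ (n-1)) := by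
      simp [Tmat, padj, c]; intro h; omega
    have h2 : (Tmat φ - padj (Tmat φ)) n (n+1) = c φ n := by
      simp [Tmat, padj, c]; intro h; omega
    rw [h1, h2]; ring
  · intro j hj
    simp only [Finset.mem_insert, Finset.mem_singleton] at hj
    push_neg at hj
    have : (Tmat φ - padj (Tmat φ)) n j = 0 := by
      simp only [Pi.sub_apply, Tmat, padj]
      rw [if_neg (by omega), if_neg (by omega), sub_zero]
    rw [this, zero_mul]

lemma pmul_A_right (φ : ℤ → ℂ) (M : PDO) (n m : ℤ) :
    pmul M (Tmat φ - padj (Tmat φ)) n m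
      = M n (m-1) * c φ (m-1) - M n (m+1) * c φ m := by
  unfold pmul
  rw [tsum_eq_sum (s := {m-1, m+1}) ?_]
  · rw [Finset.sum_pair (by omega)]
    have h1 : (Tmat φ - padj (Tmat φ)) (m-1) m = c φ (m-1) := by
      simp [Tmat, padj, c]; intro h; omega
    have h2 : (Tmat φ - padj (Tmat φ)) (m+1) m = -(c φ m) := by
      simp [Tmat, padj, c]; intro h; omega
    rw [h1, h2]; ring
  · intro j hj
    simp only [Finset.mem_insert, Finset.mem_singleton] at hj
    push_neg at hj
    have : (Tmat φ - padj (Tmat φ)) j m = 0 := by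
      simp only [Pi.sub_apply, Tmat, padj]
      rw [if_neg (by omega), if_neg (by omega), sub_zero]
    rw [this, mul_zero]

lemma pmul_T_left (φ : ℤ → ℂ) (M : PDO) (n m : ℤ) :
    pmul (Tmat φ) M n m = c φ n * M (n+1) m := by
  unfold pmul
  rw [tsum_eq_single (n+1) ?_]
  · simp [Tmat, c]
  · intro j hj; simp [Tmat, hj]

lemma pmul_T_right (φ : ℤ → ℂ) (M : PDO) (n m : ℤ) :
    pmul M (Tmat φ) n m = M n (m-1) * c φ (m-1) := by
  unfold pmul
  rw [tsum_eq_single (m-1) ?_]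
  · have : Tmat φ (m-1) m = c φ (m-1) := by simp [Tmat, c]
    rw [this]
  · intro j hj
    have : Tmat φ j m = 0 := by simp [Tmat]; intro h; omega
    rw [this, mul_zero]

lemma pmul_Tadj_left (φ : ℤ → ℂ) (M : PDO) (n m : ℤ) :
    pmul (padj (Tmat φ)) M n m = c φ (n-1) * M (n-1) m := by
  unfold pmul
  rw [tsum_eq_single (n-1) ?_]
  · have : padj (Tmat φ) n (n-1) = c φ (n-1) := by simp [Tmat, padj, c]
    rw [this]
  · intro j hj
    have : padj (Tmat φ) n j = 0 := by simp [Tmat, padj]; intro h; omega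
    rw [this, zero_mul]

lemma pmul_Tadj_right (φ : ℤ → ℂ) (M : PDO) (n m : ℤ) :
    pmul M (padj (Tmat φ)) n m = M n (m+1) * c φ m := by
  unfold pmul
  rw [tsum_eq_single (m+1) ?_]
  · simp [Tmat, padj, c]
  · intro j hj
    have : padj (Tmat φ) j m = 0 := by simp [Tmat, padj]; intro h; omega
    rw [this, mul_zero]

lemma one_pmul (M : PDO) : pmul (fun n m => if n = m then (1:ℂ) else 0) M = M := by
  funext n m
  unfold pmul
  rw [tsum_eq_single n ?_]
  · simp
  · intro j hj; simp [Ne.symm hj]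

lemma pmul_one (M : PDO) : pmul M (fun n m => if n = m then (1:ℂ) else 0) = M := by
  funext n m
  unfold pmul
  rw [tsum_eq_single m ?_]
  · simp
  · intro j hj; simp [hj]

lemma ppow_band {M : PDO} (hM : ∀ n m, m < n - 1 → M n m = 0) :
    ∀ (k : ℕ) (n m : ℤ), m < n - k → ppow M k n m = 0 := by
  intro k
  induction k with
  | zero =>
    intro n m h
    simp only [ppow, Nat.cast_zero, sub_zero] at *
    rw [if_neg (by omega)]
  | succ k ih =>
    intro n m h
    show (∑' j : ℤ, ppow M k n j * M j m) = 0
    have : ∀ j : ℤ, ppow M k n j * M j m = 0 := by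
      intro j
      rcases lt_or_ge j (n - k) with hj | hj
      · rw [ih n j hj, zero_mul]
      · rw [hM j m (by push_cast at h ⊢; omega), mul_zero]
    simp only [this, tsum_zero]

end TodaAux

namespace TodaAux

/-- Special associativity `M (P M) = (M P) M` for `M` band-below-1 and `P`
band-below-`K`. -/
lemma assoc_special {M P : PDO} (hM : ∀ n m, m < n - 1 → M n m = 0)
    (K : ℤ) (hP : ∀ n m, m < n - K → P n m = 0) :
    pmul M (pmul P M) = pmul (pmul M P) M := by
  funext n m
  have hsj : ∀ j : ℤ, (j < n - 1 ∨ m + 1 + K < j) →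
      M n j * pmul P M j m = 0 := by
    intro j hj
    rcases hj with hj | hj
    · rw [hM n j hj, zero_mul]
    · have : pmul P M j m = 0 := by
        show (∑' i : ℤ, P j i * M i m) = 0
        have : ∀ i : ℤ, P j i * M i m = 0 := by
          intro i
          rcases lt_or_ge i (j - K) with hi | hi
          · rw [hP j i hi, zero_mul]
          · rw [hM i m (by omega), mul_zero]
        simp only [this, tsum_zero]
      rw [this, mul_zero]
  have hsi : ∀ i : ℤ, (i < n - 1 - K ∨ m + 1 < i) →
      pmul M P n i * M i m = 0 := by
    intro i hi
    rcases hi with hi | hi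
    · have : pmul M P n i = 0 := by
        show (∑' j : ℤ, M n j * P j i) = 0
        have : ∀ j : ℤ, M n j * P j i = 0 := by
          intro j
          rcases lt_or_ge j (n - 1) with hj | hj
          · rw [hM n j hj, zero_mul]
          · rw [hP j i (by omega), mul_zero]
        simp only [this, tsum_zero]
      rw [this, zero_mul]
    · rw [hM i m (by omega), mul_zero]
  show (∑' j : ℤ, M n j * pmul P M j m) = ∑' i : ℤ, pmul M P n i * M i m
  rw [tsum_eq_sum (s := Finset.Icc (n-1) (m+1+K))
      (fun j hj => hsj j (by simp only [Finset.mem_Icc] at hj; omega)),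
    tsum_eq_sum (s := Finset.Icc (n-1-K) (m+1))
      (fun i hi => hsi i (by simp only [Finset.mem_Icc] at hi; omega))]
  have hL : ∀ j ∈ Finset.Icc (n-1) (m+1+K),
      M n j * pmul P M j m
        = ∑ i ∈ Finset.Icc (n-1-K) (m+1), M n j * (P j i * M i m) := by
    intro j hj
    simp only [Finset.mem_Icc] at hj
    have : pmul P M j m = ∑ i ∈ Finset.Icc (n-1-K) (m+1), P j i * M i m := by
      show (∑' i : ℤ, P j i * M i m) = _
      refine tsum_eq_sum (fun i hi => ?_)
      simp only [Finset.mem_Icc] at hi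
      rcases lt_or_ge i (j - K) with h | h
      · rw [hP j i h, zero_mul]
      · rw [hM i m (by omega), mul_zero]
    rw [this, Finset.mul_sum]
  have hR : ∀ i ∈ Finset.Icc (n-1-K) (m+1),
      pmul M P n i * M i m
        = ∑ j ∈ Finset.Icc (n-1) (m+1+K), M n j * P j i * M i m := by
    intro i hi
    simp only [Finset.mem_Icc] at hi
    have : pmul M P n i = ∑ j ∈ Finset.Icc (n-1) (m+1+K), M n j * P j i := by
      show (∑' j : ℤ, M n j * P j i) = _
      refine tsum_eq_sum (fun j hj => ?_)
      simp only [Finset.mem_Icc] at hj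
      rcases lt_or_ge j (n - 1) with h | h
      · rw [hM n j h, zero_mul]
      · rw [hP j i (by omega), mul_zero]
    rw [this, Finset.sum_mul]
  rw [Finset.sum_congr rfl hL, Finset.sum_congr rfl hR, Finset.sum_comm]
  exact Finset.sum_congr rfl fun i _ => Finset.sum_congr rfl fun j _ => by ring

lemma pmul_ppow_comm {M : PDO} (hM : ∀ n m, m < n - 1 → M n m = 0) :
    ∀ k : ℕ, pmul M (ppow M k) = pmul (ppow M k) M := by
  intro k
  induction k with
  | zero => rw [show ppow M 0 = fun n m => if n = m then (1:ℂ) else 0 from rfl,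
      one_pmul, pmul_one]
  | succ k ih =>
    show pmul M (pmul (ppow M k) M) = pmul (pmul (ppow M k) M) M
    rw [assoc_special hM (k : ℤ) (fun n m h => ppow_band hM k n m h), ih]

lemma ppow_succ' {M : PDO} (hM : ∀ n m, m < n - 1 → M n m = 0) (k : ℕ) :
    ppow M (k+1) = pmul M (ppow M k) := by
  rw [pmul_ppow_comm hM k]; rfl

lemma padj_pmul (A B : PDO) : padj (pmul B A) = pmul (padj A) (padj B) := by
  funext n m
  show (∑' j : ℤ, B m j * A j n) = ∑' j : ℤ, A j n * B m j
  exact tsum_congr fun j => mul_comm _ _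

lemma padj_ppow {L : PDO} (hL : ∀ n m, n + 1 < m → L n m = 0) (k : ℕ) :
    ppow (padj L) k = padj (ppow L k) := by
  have hadj : ∀ n m, m < n - 1 → padj L n m = 0 := fun n m h => hL m n (by omega)
  induction k with
  | zero => funext n m; simp [ppow, padj, eq_comm]
  | succ k ih =>
    show pmul (ppow (padj L) k) (padj L) = padj (pmul (ppow L k) L)
    rw [padj_pmul, ← ih, pmul_ppow_comm hadj k]


lemma key {L Lb : PDO} {φ : ℤ → ℂ}
    (hLb : ∀ n m : ℤ, m < n - 1 → Lb n m = 0)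
    (hL : ∀ n m : ℤ, n + 1 < m → L n m = 0)
    (hc : pmul (Tmat φ - padj (Tmat φ)) Lb
      = pmul (padj L) (Tmat φ - padj (Tmat φ))) :
    ∀ k : ℕ, pmul (Tmat φ - padj (Tmat φ)) (ppow Lb k)
       = pmul (ppow (padj L) k) (Tmat φ - padj (Tmat φ)) := by
  have hadj : ∀ n m : ℤ, m < n - 1 → padj L n m = 0 := fun n m h => hL m n (by omega)
  intro k
  induction k with
  | zero =>
    rw [show ppow Lb 0 = fun n m => if n = m then (1:ℂ) else 0 from rfl,
        show ppow (padj L) 0 = fun n m => if n = m then (1:ℂ) else 0 from rfl,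
        one_pmul, pmul_one]
  | succ k ih =>
    have hX := ppow_band hLb k
    have hY := ppow_band hadj k
    have IH : ∀ p q : ℤ,
        c φ p * ppow Lb k (p+1) q - c φ (p-1) * ppow Lb k (p-1) q
          = ppow (padj L) k p (q-1) * c φ (q-1) - ppow (padj L) k p (q+1) * c φ q := by
      intro p q
      have h := congrFun (congrFun ih p) q
      rwa [pmul_A_left, pmul_A_right] at h
    have hcE : ∀ p q : ℤ,
        c φ p * Lb (p+1) q - c φ (p-1) * Lb (p-1) q
          = padj L p (q-1) * c φ (q-1) - padj L p (q+1) * c φ q := by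
      intro p q
      have h := congrFun (congrFun hc p) q
      rwa [pmul_A_left, pmul_A_right] at h
    funext n m
    rw [pmul_A_left, pmul_A_right]
    have S1 : Summable (fun j : ℤ => c φ n * (ppow Lb k (n+1) j * Lb j m)) := by
      refine summable_of_band (n-2-(k:ℤ)) (m+2) (fun j hj => ?_)
      rcases hj with hj | hj
      · rw [hX (n+1) j (by omega), zero_mul, mul_zero]
      · rw [hLb j m (by omega), mul_zero, mul_zero]
    have S2 : Summable (fun j : ℤ => c φ (n-1) * (ppow Lb k (n-1) j * Lb j m)) := by
      refine summable_of_band (n-2-(k:ℤ)) (m+2) (fun j hj => ?_)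
      rcases hj with hj | hj
      · rw [hX (n-1) j (by omega), zero_mul, mul_zero]
      · rw [hLb j m (by omega), mul_zero, mul_zero]
    have S3 : Summable (fun j : ℤ => ppow (padj L) k n (j-1) * c φ (j-1) * Lb j m) := by
      refine summable_of_band (n-2-(k:ℤ)) (m+2) (fun j hj => ?_)
      rcases hj with hj | hj
      · rw [hY n (j-1) (by omega), zero_mul, zero_mul]
      · rw [hLb j m (by omega), mul_zero]
    have S4 : Summable (fun j : ℤ => ppow (padj L) k n (j+1) * c φ j * Lb j m) := by
      refine summable_of_band (n-2-(k:ℤ)) (m+2) (fun j hj => ?_)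
      rcases hj with hj | hj
      · rw [hY n (j+1) (by omega), zero_mul, zero_mul]
      · rw [hLb j m (by omega), mul_zero]
    have S5 : Summable (fun j : ℤ => ppow (padj L) k n j * c φ j * Lb (j+1) m) := by
      refine summable_of_band (n-2-(k:ℤ)) (m+2) (fun j hj => ?_)
      rcases hj with hj | hj
      · rw [hY n j (by omega), zero_mul, zero_mul]
      · rw [hLb (j+1) m (by omega), mul_zero]
    have S6 : Summable (fun j : ℤ => ppow (padj L) k n j * c φ (j-1) * Lb (j-1) m) := by
      refine summable_of_band (n-2-(k:ℤ)) (m+2) (fun j hj => ?_)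
      rcases hj with hj | hj
      · rw [hY n j (by omega), zero_mul, zero_mul]
      · rw [hLb (j-1) m (by omega), mul_zero]
    have S7 : Summable (fun j : ℤ => ppow (padj L) k n j * padj L j (m-1)) := by
      refine summable_of_band (n-2-(k:ℤ)) (m+2) (fun j hj => ?_)
      rcases hj with hj | hj
      · rw [hY n j (by omega), zero_mul]
      · rw [hadj j (m-1) (by omega), mul_zero]
    have S8 : Summable (fun j : ℤ => ppow (padj L) k n j * padj L j (m+1)) := by
      refine summable_of_band (n-2-(k:ℤ)) (m+2) (fun j hj => ?_)
      rcases hj with hj | hj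
      · rw [hY n j (by omega), zero_mul]
      · rw [hadj j (m+1) (by omega), mul_zero]
    show c φ n * (∑' j : ℤ, ppow Lb k (n+1) j * Lb j m)
        - c φ (n-1) * (∑' j : ℤ, ppow Lb k (n-1) j * Lb j m)
      = (∑' j : ℤ, ppow (padj L) k n j * padj L j (m-1)) * c φ (m-1)
        - (∑' j : ℤ, ppow (padj L) k n j * padj L j (m+1)) * c φ m
    rw [← tsum_mul_left, ← tsum_mul_left, ← Summable.tsum_sub S1 S2]
    calc
      (∑' j : ℤ, (c φ n * (ppow Lb k (n+1) j * Lb j m)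
          - c φ (n-1) * (ppow Lb k (n-1) j * Lb j m)))
        = ∑' j : ℤ, (ppow (padj L) k n (j-1) * c φ (j-1) * Lb j m
            - ppow (padj L) k n (j+1) * c φ j * Lb j m) := by
          refine tsum_congr fun j => ?_
          have h := IH n j
          calc c φ n * (ppow Lb k (n+1) j * Lb j m)
              - c φ (n-1) * (ppow Lb k (n-1) j * Lb j m)
              = (c φ n * ppow Lb k (n+1) j
                  - c φ (n-1) * ppow Lb k (n-1) j) * Lb j m := by ring
            _ = _ := by rw [h]; ring
      _ = (∑' j : ℤ, ppow (padj L) k n (j-1) * c φ (j-1) * Lb j m)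
          - ∑' j : ℤ, ppow (padj L) k n (j+1) * c φ j * Lb j m := Summable.tsum_sub S3 S4
      _ = (∑' j : ℤ, ppow (padj L) k n j * c φ j * Lb (j+1) m)
          - ∑' j : ℤ, ppow (padj L) k n j * c φ (j-1) * Lb (j-1) m := by
          congr 1
          · rw [← (Equiv.addRight (1:ℤ)).tsum_eq
              (fun j => ppow (padj L) k n (j-1) * c φ (j-1) * Lb j m)]
            refine tsum_congr fun j => ?_
            simp
          · rw [← (Equiv.subRight (1:ℤ)).tsum_eq
              (fun j => ppow (padj L) k n (j+1) * c φ j * Lb j m)]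
            refine tsum_congr fun j => ?_
            simp
      _ = ∑' j : ℤ, ppow (padj L) k n j
            * (c φ j * Lb (j+1) m - c φ (j-1) * Lb (j-1) m) := by
          rw [← Summable.tsum_sub S5 S6]
          exact tsum_congr fun j => by ring
      _ = ∑' j : ℤ, (ppow (padj L) k n j * padj L j (m-1) * c φ (m-1)
            - ppow (padj L) k n j * padj L j (m+1) * c φ m) := by
          refine tsum_congr fun j => ?_
          rw [hcE j m]
          ring
      _ = (∑' j : ℤ, ppow (padj L) k n j * padj L j (m-1)) * c φ (m-1)
          - (∑' j : ℤ, ppow (padj L) k n j * padj L j (m+1)) * c φ m := by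
          rw [Summable.tsum_sub (S7.mul_right _) (S8.mul_right _), tsum_mul_right, tsum_mul_right]

end TodaAux

open TodaAux

/-- identity (4.c4) for the negative projections under the
constraint of type B. -/
theorem typeB_negative_projection_identity
    (L Lb : PDO) (φ : ℤ → ℂ)
    (hpair : IsStandardPair L Lb)
    (hconstr : pmul (Tmat φ - padj (Tmat φ)) Lb
      = pmul (padj L) (Tmat φ - padj (Tmat φ))) :
    ∀ k : ℕ, 1 ≤ k →
      pmul (Tmat φ - padj (Tmat φ)) (Bbarop Lb k)
        - pmul (padj (Bop L k)) (Tmat φ - padj (Tmat φ))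
      = -(pmul (pdiag (-1) (ppow (padj L) k)) (Tmat φ))
        + pmul (Tmat φ) (pdiag (-1) (ppow Lb k))
        - pmul (Phiop L k) (padj (Tmat φ))
        + pmul (padj (Tmat φ)) (Phibarop Lb k) := by
  obtain ⟨hL, hLdiag, hLb⟩ := hpair
  intro k _
  have hYL : ∀ p q : ℤ, ppow L k p q = ppow (padj L) k q p :=
    fun p q => (congrFun (congrFun (padj_ppow hL k) q) p).symm
  have Hnm : ∀ n m : ℤ,
      c φ n * ppow Lb k (n+1) m - c φ (n-1) * ppow Lb k (n-1) m
        = ppow (padj L) k n (m-1) * c φ (m-1) - ppow (padj L) k n (m+1) * c φ m := by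
    intro n m
    have h := congrFun (congrFun (key hLb hL hconstr k) n) m
    rwa [pmul_A_left, pmul_A_right] at h
  funext n m
  simp only [Pi.sub_apply, Pi.add_apply, Pi.neg_apply]
  rw [pmul_A_left, pmul_A_right, pmul_T_right, pmul_T_left, pmul_Tadj_right,
    pmul_Tadj_left]
  simp only [Bbarop, Bop, Phiop, Phibarop, pminus, pplus, pzero, pdiag, padj]
  simp only [hYL]
  have H := Hnm n m
  rcases lt_trichotomy m n with hm | hm0 | hm
  · rcases eq_or_lt_of_le (show m ≤ n - 1 by omega) with hm1 | hm1
    · -- m = n - 1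
      subst hm1
      rw [if_pos (show n - 1 < n + 1 by omega),
        if_neg (show ¬ (n - 1 < n - 1) by omega),
        if_pos (show n - 1 - 1 < n by omega),
        if_neg (show ¬ (n - 1 + 1 < n) by omega),
        if_neg (show ¬ (n - 1 - 1 = n + (-1)) by omega),
        if_neg (show ¬ (n - 1 = n + 1 + (-1)) by omega),
        if_pos (show n = n - 1 + 1 by omega),
        if_pos (show n - 1 = n - 1 by omega)]
      rw [show n - 1 + 1 = n by omega] at H ⊢
      rw [show n - 1 - 1 = n - 2 by omega] at H ⊢
      linear_combination H
    · -- m < n - 1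
      rw [if_pos (show m < n + 1 by omega),
        if_pos (show m < n - 1 by omega),
        if_pos (show m - 1 < n by omega),
        if_pos (show m + 1 < n by omega),
        if_neg (show ¬ (m - 1 = n + (-1)) by omega),
        if_neg (show ¬ (m = n + 1 + (-1)) by omega),
        if_neg (show ¬ (n = m + 1) by omega),
        if_neg (show ¬ (n - 1 = m) by omega)]
      linear_combination H
  · -- m = n
    subst hm0
    rw [if_pos (show m < m + 1 by omega),
      if_neg (show ¬ (m < m - 1) by omega),
      if_pos (show m - 1 < m by omega),
      if_neg (show ¬ (m + 1 < m) by omega),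
      if_pos (show m - 1 = m + (-1) by omega),
      if_pos (show m = m + 1 + (-1) by omega),
      if_neg (show ¬ (m = m + 1) by omega),
      if_neg (show ¬ (m - 1 = m) by omega)]
    ring
  · -- n < m
    rw [if_neg (show ¬ (m < n + 1) by omega),
      if_neg (show ¬ (m < n - 1) by omega),
      if_neg (show ¬ (m - 1 < n) by omega),
      if_neg (show ¬ (m + 1 < n) by omega),
      if_neg (show ¬ (m - 1 = n + (-1)) by omega),
      if_neg (show ¬ (m = n + 1 + (-1)) by omega),
      if_neg (show ¬ (n = m + 1) by omega),
      if_neg (show ¬ (n - 1 = m) by omega)]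
    ring
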